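/- (Doctrinal adjunction, oplax case) Let L ⊣ R be an adjunction between monoidal categories (C, ⊗, I) and (D, ⊕, J), with unit η and counit ε. If L carries an oplax monoidal structure (φ, φ₀), then R carries a lax monoidal structure (γ, γ₀) (given by the mates of φ and φ₀ under the adjunction) such that the colax-lax compatibility identities hold: R(φ₀) ∘ η_I = γ₀, and R(γ_{A,B}) ∘ η_{A⊗B} is the mate-compatibility composite determined by φ_{L A, L B} ∘ (η_A ⊗ η_B); that is, the adjunction becomes a colax-lax monoidal adjunction. Moreover, if L is strong monoidal (φ and φ₀ invertible), then η and ε are monoidal natural transformations with respect to the induced structures. -/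

import Mathlib

open CategoryTheory Functor MonoidalCategory

/-- (Doctrinal adjunction, oplax case.)  Let `L ⊣ R` be an adjunction between monoidal
categories in which `L` carries an oplax monoidal structure `(φ, φ₀)` (here given by the
typeclass `L.OplaxMonoidal`, with `φ₀ = OplaxMonoidal.η L` and `φ = OplaxMonoidal.δ L`).
Then `R` carries a lax monoidal structure `(γ, γ₀)` — the mates of `φ` and `φ₀` — making
the adjunction colax-lax: `R(φ₀) ∘ η_I = γ₀` and
`R(φ_{A,B}) ∘ η_{A⊗B} = γ_{L A, L B} ∘ (η_A ⊗ η_B)`.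
Moreover, if `L` is strong monoidal (`φ₀` and all `φ_{A,B}` invertible), then the unit
and counit of the adjunction are monoidal natural transformations with respect to the
induced lax structures (the equations below are the inverse-free formulations). -/
theorem doctrinal_adjunction_oplax
    {C D : Type*} [Category C] [Category D]
    [MonoidalCategory C] [MonoidalCategory D]
    (L : C ⥤ D) (R : D ⥤ C) (adj : L ⊣ R) [L.OplaxMonoidal] :
    ∃ (γ₀ : 𝟙_ C ⟶ R.obj (𝟙_ D)) (γ : ∀ X Y : D, R.obj X ⊗ R.obj Y ⟶ R.obj (X ⊗ Y)),
      -- `γ` is natural in each variable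
      (∀ {X Y : D} (f : X ⟶ Y) (X' : D),
        R.map f ▷ R.obj X' ≫ γ Y X' = γ X X' ≫ R.map (f ▷ X')) ∧
      (∀ {X Y : D} (X' : D) (f : X ⟶ Y),
        R.obj X' ◁ R.map f ≫ γ X' Y = γ X' X ≫ R.map (X' ◁ f)) ∧
      -- lax associativity
      (∀ X Y Z : D,
        γ X Y ▷ R.obj Z ≫ γ (X ⊗ Y) Z ≫ R.map (α_ X Y Z).hom =
          (α_ (R.obj X) (R.obj Y) (R.obj Z)).hom ≫ R.obj X ◁ γ Y Z ≫ γ X (Y ⊗ Z)) ∧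
      -- lax unitality
      (∀ X : D, (λ_ (R.obj X)).hom = γ₀ ▷ R.obj X ≫ γ (𝟙_ D) X ≫ R.map (λ_ X).hom) ∧
      (∀ X : D, (ρ_ (R.obj X)).hom = R.obj X ◁ γ₀ ≫ γ X (𝟙_ D) ≫ R.map (ρ_ X).hom) ∧
      -- colax-lax compatibility: `γ₀` and `γ` are the mates of `φ₀` and `φ`
      (adj.unit.app (𝟙_ C) ≫ R.map (OplaxMonoidal.η L) = γ₀) ∧
      (∀ X Y : C, adj.unit.app (X ⊗ Y) ≫ R.map (OplaxMonoidal.δ L X Y) =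
        (adj.unit.app X ⊗ₘ adj.unit.app Y) ≫ γ (L.obj X) (L.obj Y)) ∧
      -- moreover: if `L` is strong monoidal, `η` and `ε` are monoidal
      ((IsIso (OplaxMonoidal.η L) ∧ ∀ X Y : C, IsIso (OplaxMonoidal.δ L X Y)) →
        -- monoidality of the unit `η : 𝟭 C ⟶ L ⋙ R`
        (adj.unit.app (𝟙_ C) ≫ R.map (OplaxMonoidal.η L) = γ₀) ∧
        (∀ X Y : C, adj.unit.app (X ⊗ Y) ≫ R.map (OplaxMonoidal.δ L X Y) =
          (adj.unit.app X ⊗ₘ adj.unit.app Y) ≫ γ (L.obj X) (L.obj Y)) ∧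
        -- monoidality of the counit `ε : R ⋙ L ⟶ 𝟭 D`
        (L.map γ₀ ≫ adj.counit.app (𝟙_ D) = OplaxMonoidal.η L) ∧
        (∀ X Y : D, L.map (γ X Y) ≫ adj.counit.app (X ⊗ Y) =
          OplaxMonoidal.δ L (R.obj X) (R.obj Y) ≫
            (adj.counit.app X ⊗ₘ adj.counit.app Y))) := by
  letI := adj.rightAdjointLaxMonoidal
  refine ⟨LaxMonoidal.ε R, LaxMonoidal.μ R, ?_, ?_, ?_, ?_, ?_, ?_, ?_, ?_⟩
  · intro X Y f X'; exact LaxMonoidal.μ_natural_left (F := R) f X'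
  · intro X Y X' f; exact LaxMonoidal.μ_natural_right (F := R) X' f
  · exact LaxMonoidal.associativity R
  · exact LaxMonoidal.left_unitality R
  · exact LaxMonoidal.right_unitality R
  · exact adj.unit_app_unit_comp_map_η
  · exact adj.unit_app_tensor_comp_map_δ
  · intro _
    exact ⟨adj.unit_app_unit_comp_map_η, adj.unit_app_tensor_comp_map_δ,
      adj.map_ε_comp_counit_app_unit, adj.map_μ_comp_counit_app_tensor⟩
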